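/- Let P be a locally finite poset colored by a finite simple graph Γ, and suppose the free vector space on FI(P) carries operators {X_a, H_a} satisfying the relations [H_b, X_a] = θ_{ab} X_a for all a, b, such that the eigenvalue of H_a on every basis vector ⟨F,I⟩ lies in {−1, 0, 1, 2, ...}, and such that H_a.⟨F,I⟩ = −⟨F,I⟩ if and only if a is the color of a minimal element of F. If furthermore X_a² = 0 for all a, then P satisfies Mx1GA: for every color b, if y is maximal in P_b then at most one element greater than y has color adjacent to b. -/

import Mathlib

open Finsupp

section ColoredPosets

open scoped Classical

variable {P : Type*} {Γ : Type*} [PartialOrder P]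

/-- `x` is a minimal element of the subset `F`. -/
def MinIn (F : Set P) (x : P) : Prop := x ∈ F ∧ ∀ y ∈ F, y ≤ x → y = x

/-- `y` is a maximal element of the complement (the ideal) of `F`. -/
def MaxInCompl (F : Set P) (y : P) : Prop := y ∉ F ∧ ∀ z, z ∉ F → y ≤ z → z = y

/-- A split of `P`, recorded by its filter part; the ideal is the complement. -/
abbrev Split (P : Type*) [PartialOrder P] := {F : Set P // IsUpperSet F}

theorem upper_erase {F : Set P} (hF : IsUpperSet F) {x : P} (hx : MinIn F x) :
    IsUpperSet (F \ {x}) := by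
  intro u v huv hu
  refine ⟨hF huv hu.1, fun hv => ?_⟩
  rw [Set.mem_singleton_iff] at hv
  subst hv
  exact hu.2 (Set.mem_singleton_iff.mpr (hx.2 u hu.1 huv))

theorem upper_insert {F : Set P} (hF : IsUpperSet F) {y : P} (hy : MaxInCompl F y) :
    IsUpperSet (insert y F) := by
  intro u v huv hu
  rcases hu with rfl | hu
  · by_cases hvF : v ∈ F
    · exact Set.mem_insert_of_mem _ hvF
    · rw [hy.2 v hvF huv]; exact Set.mem_insert _ _
  · exact Set.mem_insert_of_mem _ (hF huv hu)

/-- The image of the basis vector `⟨F,I⟩` under the color raising operator `X_a`: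
the sum of `⟨F-x, I+x⟩` over all minimal elements `x` of `F` of color `a`. -/
noncomputable def XF (κ : P → Γ) (a : Γ) (F : Split P) : Split P →₀ ℂ :=
  ∑ᶠ x : P, if h : MinIn F.1 x ∧ κ x = a then
    Finsupp.single ⟨F.1 \ {x}, upper_erase F.2 h.1⟩ 1 else 0

/-- The color raising operator `X_a` on the free complex vector space on splits. -/
noncomputable def Xop (κ : P → Γ) (a : Γ) : Module.End ℂ (Split P →₀ ℂ) :=
  Finsupp.linearCombination ℂ (XF κ a)

/-- The image of the basis vector `⟨F,I⟩` under the color lowering operator `Y_a`: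
the sum of `⟨F+y, I-y⟩` over all maximal elements `y` of `I` of color `a`. -/
noncomputable def YF (κ : P → Γ) (a : Γ) (F : Split P) : Split P →₀ ℂ :=
  ∑ᶠ y : P, if h : MaxInCompl F.1 y ∧ κ y = a then
    Finsupp.single ⟨insert y F.1, upper_insert F.2 h.1⟩ 1 else 0

/-- The color lowering operator `Y_a`. -/
noncomputable def Yop (κ : P → Γ) (a : Γ) : Module.End ℂ (Split P →₀ ℂ) :=
  Finsupp.linearCombination ℂ (YF κ a)

/-- The diagonal operator with eigenvalue function `η a`. -/
noncomputable def Hop (η : Γ → Split P → ℂ) (a : Γ) : Module.End ℂ (Split P →₀ ℂ) :=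
  Finsupp.linearCombination ℂ (fun F => η a F • Finsupp.single F (1 : ℂ))

/-- The generalized Cartan matrix entries of the simple graph `Γ`. -/
noncomputable def theta (G : SimpleGraph Γ) (a b : Γ) : ℤ :=
  if a = b then 2 else if G.Adj a b then -1 else 0

/-- `Δ_b[(F',I'),(F,I)] = |P_b ∩ (I'−I)| − |P_b ∩ (I−I')|`. -/
noncomputable def Delta (κ : P → Γ) (b : Γ) (F' F : Split P) : ℤ :=
  (Nat.card {x : P // κ x = b ∧ x ∈ F.1 ∧ x ∉ F'.1} : ℤ)
    - (Nat.card {x : P // κ x = b ∧ x ∈ F'.1 ∧ x ∉ F.1} : ℤ)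

/-- One covering step upward in the Hasse diagram of `FI(P)`:
a minimal element of the filter is transferred to the ideal. -/
def SplitStep (F G : Split P) : Prop := ∃ x, MinIn F.1 x ∧ G.1 = F.1 \ {x}

/-- Two splits are in the same component when joined by a finite path in the
Hasse diagram of `FI(P)`, edges traversed in either direction. -/
def SameComponent (F G : Split P) : Prop :=
  Relation.ReflTransGen (fun A B => SplitStep A B ∨ SplitStep B A) F G

/-- Sum over the colors adjacent to `b` in `Γ`. -/
noncomputable def adjSum [Fintype Γ] (G : SimpleGraph Γ) (b : Γ) (f : Γ → ℤ) : ℤ :=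
  ∑ c ∈ Finset.univ.filter (fun c => G.Adj c b), f c

/-- An edge weight function on `FI(P)`. -/
def IsEdgeWeight (G : SimpleGraph Γ) (κ : P → Γ) (η : Γ → Split P → ℂ) : Prop :=
  ∀ (b : Γ) (F : Split P) (x : P) (hx : MinIn F.1 x),
    η b ⟨F.1 \ {x}, upper_erase F.2 hx⟩ - η b F = ((theta G (κ x) b : ℤ) : ℂ)

/-- A component weight function on `FI(P)`. -/
def IsComponentWeight [Fintype Γ] (G : SimpleGraph Γ) (κ : P → Γ)
    (η : Γ → Split P → ℂ) : Prop :=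
  ∀ (b : Γ) (F F' : Split P), SameComponent F F' →
    η b F' - η b F =
      ((2 * Delta κ b F' F - adjSum G b (fun c => Delta κ c F' F) : ℤ) : ℂ)


lemma Xop_single (κ : P → Γ) (a : Γ) (F : Split P) :
    Xop κ a (Finsupp.single F 1) = XF κ a F := by
  simp [Xop]

lemma Hop_single (η : Γ → Split P → ℂ) (d : Γ) (F : Split P) :
    Hop η d (Finsupp.single F 1) = η d F • Finsupp.single F 1 := by
  simp [Hop]

lemma key_step [Fintype Γ] (G : SimpleGraph Γ) (κ : P → Γ) (η : Γ → Split P → ℂ)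
    (hrel : ∀ a b : Γ,
      Hop η b * Xop κ a - Xop κ a * Hop η b = ((theta G a b : ℤ) : ℂ) • Xop κ a)
    (F : Split P) (a : Γ)
    (hfin : {x : P | MinIn F.1 x ∧ κ x = a}.Finite)
    {x : P} (hx : MinIn F.1 x) (hxa : κ x = a) (d : Γ) :
    η d ⟨F.1 \ {x}, upper_erase F.2 hx⟩ = η d F + ((theta G a d : ℤ) : ℂ) := by
  classical
  set Gx : Split P := ⟨F.1 \ {x}, upper_erase F.2 hx⟩ with hGxdef
  have hxs : x ∈ hfin.toFinset := by simp [hx, hxa]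
  have hXF : XF κ a F = ∑ x' ∈ hfin.toFinset,
      (if h : MinIn F.1 x' ∧ κ x' = a then
        Finsupp.single (⟨F.1 \ {x'}, upper_erase F.2 h.1⟩ : Split P) (1 : ℂ) else 0) := by
    refine finsum_eq_sum_of_support_subset _ ?_
    intro x' hx'
    rw [Function.mem_support] at hx'
    by_cases h : MinIn F.1 x' ∧ κ x' = a
    · simpa using h
    · simp [h] at hx'
  have hinj : ∀ x' : P, MinIn F.1 x' → F.1 \ {x'} = F.1 \ {x} → x' = x := by
    intro x' hx' he
    by_contra hne
    have h1 : x' ∈ F.1 \ {x} := ⟨hx'.1, by simpa using hne⟩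
    rw [← he] at h1
    exact h1.2 rfl
  have hB : (XF κ a F) Gx = 1 := by
    rw [hXF, Finsupp.finset_sum_apply]
    rw [Finset.sum_eq_single_of_mem x hxs]
    · rw [dif_pos ⟨hx, hxa⟩]
      exact Finsupp.single_eq_same
    · intro x' _ hne
      by_cases h : MinIn F.1 x' ∧ κ x' = a
      · rw [dif_pos h, Finsupp.single_apply, if_neg]
        intro hc
        exact hne (hinj x' h.1 (congrArg Subtype.val hc))
      · rw [dif_neg h]; rfl
  have hA : (Hop η d (XF κ a F)) Gx = η d Gx := by
    rw [hXF, map_sum, Finsupp.finset_sum_apply]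
    rw [Finset.sum_eq_single_of_mem x hxs]
    · rw [dif_pos ⟨hx, hxa⟩, Hop_single, Finsupp.smul_apply, Finsupp.single_eq_same,
        smul_eq_mul, mul_one]
    · intro x' _ hne
      by_cases h : MinIn F.1 x' ∧ κ x' = a
      · rw [dif_pos h, Hop_single, Finsupp.smul_apply, Finsupp.single_apply, if_neg, smul_zero]
        intro hc
        exact hne (hinj x' h.1 (congrArg Subtype.val hc))
      · rw [dif_neg h, map_zero]; rfl
  have H := LinearMap.congr_fun (hrel a d) (Finsupp.single F (1 : ℂ))
  have H2 := DFunLike.congr_fun H Gx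
  rw [LinearMap.sub_apply, Module.End.mul_apply, Module.End.mul_apply, LinearMap.smul_apply,
    Hop_single, map_smul, Xop_single, Finsupp.sub_apply, Finsupp.smul_apply,
    Finsupp.smul_apply, hA, hB] at H2
  simp only [smul_eq_mul, mul_one] at H2
  linear_combination H2

lemma upper_lt_diff (y : P) (T : Set P) (hT : ∀ x ∈ T, ∀ w, y < w → w < x → w ∈ T) :
    IsUpperSet ({w : P | y < w} \ T) := by
  intro u v huv hu
  refine ⟨lt_of_lt_of_le hu.1 huv, fun hv => ?_⟩
  rcases eq_or_lt_of_le huv with rfl | h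
  · exact hu.2 hv
  · exact hu.2 (hT v hv u hu.1 h)

lemma same_color_comparable [Fintype Γ] (G : SimpleGraph Γ) (κ : P → Γ)
    (η : Γ → Split P → ℂ)
    (hrel : ∀ a b : Γ,
      Hop η b * Xop κ a - Xop κ a * Hop η b = ((theta G a b : ℤ) : ℂ) • Xop κ a)
    (hminus : ∀ (a : Γ) (F : Split P),
      η a F = -1 ↔ ∃ x : P, MinIn F.1 x ∧ κ x = a)
    (m₁ m₂ : P) (hc : κ m₁ = κ m₂) : m₁ ≤ m₂ ∨ m₂ ≤ m₁ := by
  by_contra hcon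
  push_neg at hcon
  obtain ⟨h12, h21⟩ := hcon
  have hne : m₁ ≠ m₂ := fun h => h12 (le_of_eq h)
  have hUp : IsUpperSet {w : P | m₁ ≤ w ∨ m₂ ≤ w} := by
    intro u v huv hu
    rcases hu with h | h
    · exact Or.inl (h.trans huv)
    · exact Or.inr (h.trans huv)
  set U : Split P := ⟨{w | m₁ ≤ w ∨ m₂ ≤ w}, hUp⟩ with hUdef
  have hmin1 : MinIn U.1 m₁ := by
    refine ⟨Or.inl le_rfl, fun w hw hwle => ?_⟩
    rcases hw with h | h
    · exact le_antisymm hwle h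
    · exact absurd (h.trans hwle) h21
  have hmin2 : MinIn U.1 m₂ := by
    refine ⟨Or.inr le_rfl, fun w hw hwle => ?_⟩
    rcases hw with h | h
    · exact absurd (h.trans hwle) h12
    · exact le_antisymm hwle h
  have hfin : {x : P | MinIn U.1 x ∧ κ x = κ m₁}.Finite := by
    apply Set.Finite.subset ((Set.finite_singleton m₂).insert m₁)
    intro w hw
    rcases hw.1.1 with h | h
    · rw [show w = m₁ from (hw.1.2 m₁ (Or.inl le_rfl) h).symm]
      exact Set.mem_insert _ _
    · rw [show w = m₂ from (hw.1.2 m₂ (Or.inr le_rfl) h).symm]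
      exact Set.mem_insert_of_mem m₁ rfl
  have hkey := key_step G κ η hrel U (κ m₁) hfin hmin1 rfl (κ m₁)
  have hU0 : η (κ m₁) U = -1 := (hminus _ _).mpr ⟨m₁, hmin1, rfl⟩
  have hmin2' : MinIn (U.1 \ {m₁}) m₂ :=
    ⟨⟨hmin2.1, by simpa using hne.symm⟩, fun w hw hwle => hmin2.2 w hw.1 hwle⟩
  have hU1 : η (κ m₁) ⟨U.1 \ {m₁}, upper_erase U.2 hmin1⟩ = -1 :=
    (hminus _ _).mpr ⟨m₂, hmin2', hc.symm⟩
  rw [hU1, hU0] at hkey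
  norm_num [theta] at hkey

lemma full_step [Fintype Γ] (G : SimpleGraph Γ) (κ : P → Γ) (η : Γ → Split P → ℂ)
    (hrel : ∀ a b : Γ,
      Hop η b * Xop κ a - Xop κ a * Hop η b = ((theta G a b : ℤ) : ℂ) • Xop κ a)
    (hminus : ∀ (a : Γ) (F : Split P),
      η a F = -1 ↔ ∃ x : P, MinIn F.1 x ∧ κ x = a)
    (F : Split P) {x : P} (hx : MinIn F.1 x) (d : Γ) :
    η d ⟨F.1 \ {x}, upper_erase F.2 hx⟩ = η d F + ((theta G (κ x) d : ℤ) : ℂ) := by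
  have hfin : {x' : P | MinIn F.1 x' ∧ κ x' = κ x}.Finite := by
    apply Set.Subsingleton.finite
    intro u hu v hv
    rcases same_color_comparable G κ η hrel hminus u v (hu.2.trans hv.2.symm) with h | h
    · exact hv.1.2 u hu.1.1 h
    · exact (hu.1.2 v hv.1.1 h).symm
  exact key_step G κ η hrel F (κ x) hfin hx rfl d

lemma chain_sum [Fintype Γ] (G : SimpleGraph Γ) (κ : P → Γ) (η : Γ → Split P → ℂ)
    (step : ∀ (F : Split P) {x : P} (hx : MinIn F.1 x) (d : Γ),
      η d ⟨F.1 \ {x}, upper_erase F.2 hx⟩ = η d F + ((theta G (κ x) d : ℤ) : ℂ))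
    (y : P) (b : Γ) (hU1 : IsUpperSet {w : P | y < w}) :
    ∀ T : Finset P, (∀ x ∈ T, y < x) → (∀ x ∈ T, ∀ w, y < w → w < x → w ∈ T) →
      ∀ (hU : IsUpperSet ({w : P | y < w} \ ↑T)),
      η b ⟨{w : P | y < w} \ ↑T, hU⟩ =
        η b ⟨{w : P | y < w}, hU1⟩ + ∑ x ∈ T, ((theta G (κ x) b : ℤ) : ℂ) := by
  intro T
  induction T using Finset.strongInduction with
  | _ T ih =>
    intro h1 h2 hU
    rcases T.eq_empty_or_nonempty with rfl | hnonempty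
    · rw [Finset.sum_empty, add_zero]
      exact congrArg (η b) (Subtype.ext (by simp))
    · obtain ⟨x, hxT, hxmax⟩ := T.exists_maximal hnonempty
      set T' := T.erase x with hT'
      have hsub : T' ⊂ T := Finset.erase_ssubset hxT
      have h1' : ∀ z ∈ T', y < z := fun z hz => h1 z (Finset.mem_of_mem_erase hz)
      have h2' : ∀ z ∈ T', ∀ w, y < w → w < z → w ∈ T' := by
        intro z hz w hyw hwz
        have hwT : w ∈ T := h2 z (Finset.mem_of_mem_erase hz) w hyw hwz
        refine Finset.mem_erase.mpr ⟨?_, hwT⟩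
        rintro rfl
        exact (lt_irrefl _) (hwz.trans_le (hxmax (Finset.mem_of_mem_erase hz) hwz.le))
      have hU' : IsUpperSet ({w : P | y < w} \ ↑T') := by
        refine upper_lt_diff y _ ?_
        intro z hz w hyw hwz
        exact h2' z hz w hyw hwz
      have hminx : MinIn ({w : P | y < w} \ ↑T') x := by
        refine ⟨⟨h1 x hxT, by simp [hT']⟩, ?_⟩
        intro w hw hwx
        by_contra hne'
        have hwlt : w < x := lt_of_le_of_ne hwx hne'
        have hwT : w ∈ T := h2 x hxT w hw.1 hwlt
        exact hw.2 (by simp [hT', hne', hwT])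
      have hsets : ({w : P | y < w} \ ↑T') \ {x} = {w : P | y < w} \ ↑T := by
        rw [hT', Finset.coe_erase, Set.diff_diff, Set.diff_union_self,
          Set.union_eq_left.mpr (by simpa using hxT)]
      have hstep := step ⟨_, hU'⟩ hminx b
      have hsum := Finset.sum_erase_add T (fun z => ((theta G (κ z) b : ℤ) : ℂ)) hxT
      calc η b ⟨{w : P | y < w} \ ↑T, hU⟩
          = η b ⟨({w : P | y < w} \ ↑T') \ {x}, upper_erase hU' hminx⟩ :=
            congrArg (η b) (Subtype.ext hsets.symm)
        _ = η b ⟨{w : P | y < w} \ ↑T', hU'⟩ + ((theta G (κ x) b : ℤ) : ℂ) := hstep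
        _ = η b ⟨{w : P | y < w}, hU1⟩ + ∑ z ∈ T, ((theta G (κ z) b : ℤ) : ℂ) := by
            rw [ih T' hsub h1' h2' hU', ← hsum]
            ring

/-- If the operators `{X_a, H_a}` satisfy the relations
`[H_b, X_a] = θ_{ab} X_a` with eigenvalues in `{-1, 0, 1, 2, ...}`, with
eigenvalue `-1` exactly at the colors of minimal elements of filters, and
`X_a² = 0` for all `a`, then `P` satisfies Mx1GA. -/
theorem stmt19 [LocallyFiniteOrder P] [Fintype Γ] (G : SimpleGraph Γ)
    (κ : P → Γ) (hsurj : Function.Surjective κ)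
    (η : Γ → Split P → ℂ)
    (hrel : ∀ a b : Γ,
      Hop η b * Xop κ a - Xop κ a * Hop η b = ((theta G a b : ℤ) : ℂ) • Xop κ a)
    (heig : ∀ (a : Γ) (F : Split P), ∃ n : ℤ, -1 ≤ n ∧ η a F = (n : ℂ))
    (hminus : ∀ (a : Γ) (F : Split P),
      η a F = -1 ↔ ∃ x : P, MinIn F.1 x ∧ κ x = a)
    (hsq : ∀ a : Γ, Xop κ a * Xop κ a = 0) :
    ∀ y : P, (∀ z : P, κ z = κ y → ¬ y < z) →
      Nat.card {z : P // y < z ∧ G.Adj (κ z) (κ y)} ≤ 1 := by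
  intro y hmax
  have step := full_step G κ η hrel hminus
  have hsub : Subsingleton {z : P // y < z ∧ G.Adj (κ z) (κ y)} := by
    refine ⟨fun w₁ w₂ => ?_⟩
    obtain ⟨z₁, hyz₁, hadj₁⟩ := w₁
    obtain ⟨z₂, hyz₂, hadj₂⟩ := w₂
    refine Subtype.ext ?_
    by_contra hne
    set b := κ y with hbdef
    -- base split and its eta value
    have hUp0 : IsUpperSet {w : P | y ≤ w} := fun u v huv hu => le_trans hu huv
    set F₀ : Split P := ⟨{w | y ≤ w}, hUp0⟩ with hF₀
    have hminy : MinIn F₀.1 y := ⟨le_rfl, fun w hw hwy => le_antisymm hwy hw⟩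
    have hb0 : η b F₀ = -1 := (hminus b F₀).mpr ⟨y, hminy, rfl⟩
    have hUp1 : IsUpperSet {w : P | y < w} := fun u v huv hu => lt_of_lt_of_le hu huv
    have hset1 : F₀.1 \ {y} = {w : P | y < w} := by
      ext w
      simp only [hF₀, Set.mem_diff, Set.mem_setOf_eq, Set.mem_singleton_iff]
      constructor
      · rintro ⟨h1, h2⟩
        exact lt_of_le_of_ne h1 (Ne.symm h2)
      · intro h
        exact ⟨le_of_lt h, fun hc => absurd (hc ▸ h) (lt_irrefl w)⟩
    have hb1 : η b ⟨{w : P | y < w}, hUp1⟩ = 1 := by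
      have h := step F₀ hminy b
      rw [hb0] at h
      have he : (⟨{w : P | y < w}, hUp1⟩ : Split P) =
          ⟨F₀.1 \ {y}, upper_erase F₀.2 hminy⟩ := Subtype.ext hset1.symm
      rw [he, h, ← hbdef]
      norm_num [theta]
    -- the finite set to be removed
    set T : Finset P := Finset.Ioc y z₁ ∪ Finset.Ioc y z₂ with hT
    have hmemT : ∀ x, x ∈ T ↔ (y < x ∧ x ≤ z₁) ∨ (y < x ∧ x ≤ z₂) := by
      intro x
      simp [hT, Finset.mem_Ioc]
    have h1 : ∀ x ∈ T, y < x := by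
      intro x hx
      rcases (hmemT x).mp hx with h | h
      · exact h.1
      · exact h.1
    have h2 : ∀ x ∈ T, ∀ w, y < w → w < x → w ∈ T := by
      intro x hx w hyw hwx
      rcases (hmemT x).mp hx with h | h
      · exact (hmemT w).mpr (Or.inl ⟨hyw, (le_of_lt hwx).trans h.2⟩)
      · exact (hmemT w).mpr (Or.inr ⟨hyw, (le_of_lt hwx).trans h.2⟩)
    have hU : IsUpperSet ({w : P | y < w} \ ↑T) := by
      refine upper_lt_diff y _ ?_
      intro z hz w hyw hwz
      exact h2 z hz w hyw hwz
    have hval := chain_sum G κ η step y b hUp1 T h1 h2 hU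
    rw [hb1] at hval
    -- integer sum bound
    set f : P → ℤ := fun z => theta G (κ z) b with hf
    have hnonpos : ∀ x ∈ T, f x ≤ 0 := by
      intro x hx
      have hnb : κ x ≠ b := fun h => hmax x h (h1 x hx)
      simp only [hf, theta, if_neg hnb]
      split <;> norm_num
    have hz₁T : z₁ ∈ T := (hmemT z₁).mpr (Or.inl ⟨hyz₁, le_rfl⟩)
    have hz₂T : z₂ ∈ T := (hmemT z₂).mpr (Or.inr ⟨hyz₂, le_rfl⟩)
    have hfz₁ : f z₁ = -1 := by simp [hf, theta, hadj₁.ne, hadj₁]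
    have hfz₂ : f z₂ = -1 := by simp [hf, theta, hadj₂.ne, hadj₂]
    have hz₂T' : z₂ ∈ T.erase z₁ := Finset.mem_erase.mpr ⟨fun h => hne h.symm, hz₂T⟩
    have e1 := Finset.sum_erase_add T f hz₁T
    have e2 := Finset.sum_erase_add (T.erase z₁) f hz₂T'
    have e3 : ∑ x ∈ (T.erase z₁).erase z₂, f x ≤ 0 :=
      Finset.sum_nonpos fun x hx =>
        hnonpos x (Finset.mem_of_mem_erase (Finset.mem_of_mem_erase hx))
    have hsum2 : (∑ x ∈ T, f x) ≤ -2 := by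
      rw [← e1, ← e2]
      rw [hfz₁, hfz₂] at *
      linarith
    have hcast : (1 : ℂ) + ∑ x ∈ T, ((theta G (κ x) b : ℤ) : ℂ)
        = (((1 + ∑ x ∈ T, f x : ℤ) : ℤ) : ℂ) := by
      push_cast [hf]
      ring
    obtain ⟨n, hn1, hn2⟩ := heig b ⟨{w : P | y < w} \ ↑T, hU⟩
    rw [hval, hcast] at hn2
    have hn3 : n = 1 + ∑ x ∈ T, f x := by exact_mod_cast hn2.symm
    have hn4 : n = -1 := by omega
    have hminusb : η b ⟨{w : P | y < w} \ ↑T, hU⟩ = -1 := by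
      rw [hval, hcast, ← hn3, hn4]
      norm_num
    obtain ⟨x, hxmin, hxb⟩ := (hminus b ⟨{w : P | y < w} \ ↑T, hU⟩).mp hminusb
    exact hmax x hxb hxmin.1.1
  haveI := hsub
  haveI : Finite {z : P // y < z ∧ G.Adj (κ z) (κ y)} := Finite.of_subsingleton
  exact Finite.card_le_one_iff_subsingleton.mpr hsub


end ColoredPosets
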